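/- A noetherian normal cancellative commutative pointed monoid A is the intersection of its localizations at height one primes: for every element x of the group completion A₀, x lies in (the image of) A if and only if for every height one prime ideal p of A there exist a ∈ A and s ∈ A ∖ p with x = a/s in A₀; equivalently, A = ⋂_p A_p inside A₀, the intersection ranging over all height one primes p of A. -/

import Mathlib

/-- An ideal of a commutative pointed monoid `A`. -/
def IsMIdeal {A : Type*} [CommMonoidWithZero A] (I : Set A) : Prop :=
  (0 : A) ∈ I ∧ ∀ a x : A, x ∈ I → a * x ∈ I

/-- A prime ideal of a commutative pointed monoid. -/
def IsMPrime {A : Type*} [CommMonoidWithZero A] (p : Set A) : Prop :=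
  IsMIdeal p ∧ p ≠ Set.univ ∧ ∀ a b : A, a * b ∈ p → a ∈ p ∨ b ∈ p

/-- A commutative pointed monoid is noetherian if every ascending chain of ideals
stabilizes. -/
def MonNoetherian (A : Type*) [CommMonoidWithZero A] : Prop :=
  ∀ c : ℕ → Set A, (∀ n, IsMIdeal (c n)) → (∀ n, c n ⊆ c (n + 1)) →
    ∃ N, ∀ m, N ≤ m → c m = c N

/-- A cancellative commutative pointed monoid is normal when it is integrally closed in
its group completion: any fraction `a / s` (with `s ≠ 0`) some power of which lies in `A`
already lies in `A`. -/
def MonNormal (A : Type*) [CommMonoidWithZero A] [IsCancelMulZero A] : Prop :=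
  ∀ a s : A, s ≠ 0 → (∃ n : ℕ, 1 ≤ n ∧ ∃ c : A, a ^ n = c * s ^ n) → s ∣ a

/-- A prime `p` has height one: there is a prime strictly contained in `p`, and there is
no chain `p₀ ⊊ p₁ ⊊ p` of primes below `p`. -/
def HeightOne {A : Type*} [CommMonoidWithZero A] (p : Set A) : Prop :=
  (∃ p₀ : Set A, IsMPrime p₀ ∧ p₀ ⊂ p) ∧
    ∀ p₀ p₁ : Set A, IsMPrime p₀ → IsMPrime p₁ → p₀ ⊂ p₁ → ¬ p₁ ⊂ p

section Aux

variable {A : Type*} [CommMonoidWithZero A] [IsCancelMulZero A]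

/-- From the chain condition: every nonempty family of ideals has a maximal element. -/
lemma monNoetherian_exists_maximal (hN : MonNoetherian A) (S : Set (Set A))
    (hS : ∀ I ∈ S, IsMIdeal I) (hne : S.Nonempty) :
    ∃ I ∈ S, ∀ J ∈ S, I ⊆ J → J = I := by
  by_contra hcon
  push_neg at hcon
  have hstep : ∀ I : {I // I ∈ S}, ∃ J : {I // I ∈ S}, I.1 ⊆ J.1 ∧ J.1 ≠ I.1 := by
    rintro ⟨I, hI⟩
    obtain ⟨J, hJ, h1, h2⟩ := hcon I hI
    exact ⟨⟨J, hJ⟩, h1, h2⟩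
  choose g hsub hgne using hstep
  obtain ⟨I₀, hI₀⟩ := hne
  set c : ℕ → {I // I ∈ S} := fun n => g^[n] ⟨I₀, hI₀⟩ with hc
  have hcs : ∀ n, c (n + 1) = g (c n) := fun n => Function.iterate_succ_apply' g n _
  obtain ⟨N, hst⟩ := hN (fun n => (c n).1) (fun n => hS _ (c n).2)
    (fun n => by show (c n).1 ⊆ (c (n + 1)).1; rw [hcs n]; exact hsub (c n))
  have h1 := hst (N + 1) (Nat.le_succ N)
  rw [hcs N] at h1
  exact hgne (c N) h1

/-- A maximal "colon ideal" prime containing (sA : a). -/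
lemma exists_prime_colon (hN : MonNoetherian A) (a s : A) (hsa : ¬ s ∣ a) :
    ∃ d₀ : A, ¬ s ∣ a * d₀ ∧ IsMPrime {b | s ∣ a * d₀ * b} := by
  obtain ⟨p, hpS, hmax⟩ := monNoetherian_exists_maximal hN
    {I | ∃ d, ¬ s ∣ a * d ∧ I = {b | s ∣ a * d * b}}
    (by
      rintro I ⟨d, -, rfl⟩
      refine ⟨show s ∣ a * d * 0 by simp, ?_⟩
      intro u x hx
      show s ∣ a * d * (u * x)
      have h2 : s ∣ u * (a * d * x) := hx.mul_left u
      rwa [show u * (a * d * x) = a * d * (u * x) by ac_rfl] at h2)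
    ⟨{b | s ∣ a * 1 * b}, 1, by simpa using hsa, rfl⟩
  obtain ⟨d₀, hd₀, rfl⟩ := hpS
  refine ⟨d₀, hd₀, ⟨?_, ?_⟩, ?_, ?_⟩
  · show s ∣ a * d₀ * 0; simp
  · intro u x hx
    show s ∣ a * d₀ * (u * x)
    have h2 : s ∣ u * (a * d₀ * x) := hx.mul_left u
    rwa [show u * (a * d₀ * x) = a * d₀ * (u * x) by ac_rfl] at h2
  · intro hcon
    apply hd₀
    have h1 : (1 : A) ∈ {b | s ∣ a * d₀ * b} := hcon ▸ Set.mem_univ 1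
    simpa using h1
  · intro u v huv
    by_cases hv : v ∈ {b | s ∣ a * d₀ * b}
    · exact Or.inr hv
    · left
      have hvd : ¬ s ∣ a * d₀ * v := hv
      have hsub : {b | s ∣ a * d₀ * b} ⊆ {b | s ∣ a * (d₀ * v) * b} := by
        intro x hx
        show s ∣ a * (d₀ * v) * x
        have h2 : s ∣ (a * d₀ * x) * v := Dvd.dvd.mul_right hx v
        rwa [show (a * d₀ * x) * v = a * (d₀ * v) * x by ac_rfl] at h2
      have hmem : {b | s ∣ a * (d₀ * v) * b} ∈
          {I | ∃ d, ¬ s ∣ a * d ∧ I = {b | s ∣ a * d * b}} :=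
        ⟨d₀ * v, by rwa [← mul_assoc], rfl⟩
      have heq := hmax _ hmem hsub
      have hu : u ∈ {b | s ∣ a * (d₀ * v) * b} := by
        show s ∣ a * (d₀ * v) * u
        have h2 : s ∣ a * d₀ * (u * v) := huv
        rwa [show a * d₀ * (u * v) = a * (d₀ * v) * u by ac_rfl] at h2
      rw [heq] at hu
      exact hu

/-- In a noetherian normal cancellative monoid, a prime of the form `(sA : t)`
with `s ∤ t` has height one. -/
lemma colon_prime_heightOne (hN : MonNoetherian A) (hnormal : MonNormal A)
    (t s : A) (hs : s ≠ 0) (hst : ¬ s ∣ t)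
    (hp : IsMPrime {b | s ∣ t * b}) : HeightOne {b | s ∣ t * b} := by
  classical
  set p : Set A := {b | s ∣ t * b} with hpdef
  obtain ⟨⟨hp0, hpmul⟩, hpproper, hpprime⟩ := hp
  have ht0 : t ≠ 0 := fun h0 => hst (h0 ▸ dvd_zero s)
  have hsp : s ∈ p := dvd_mul_left s t
  have h1p : (1 : A) ∉ p := fun h => hst (by
    have h' : s ∣ t * 1 := h
    rwa [mul_one] at h')
  -- key step: x' * p ⊄ p where x' = t/s
  have hkey : ∃ b ∈ p, ∃ w, t * b = w * s ∧ w ∉ p := by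
    by_contra hxp
    push_neg at hxp
    have ht_mem : t ∈ p := hxp s hsp t rfl
    have hind : ∀ n : ℕ, ∃ w ∈ p, t ^ (n + 1) = w * s ^ n := by
      intro n
      induction n with
      | zero => exact ⟨t, ht_mem, by simp⟩
      | succ n ih =>
        obtain ⟨w, hw, heq⟩ := ih
        have hw' := hw
        obtain ⟨c, hc⟩ := hw'
        have hcp : c ∈ p := hxp w hw c (by rw [hc, mul_comm])
        refine ⟨c, hcp, ?_⟩
        calc t ^ (n + 2) = t ^ (n + 1) * t := by rw [pow_succ]
          _ = (w * s ^ n) * t := by rw [heq]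
          _ = (t * w) * s ^ n := by ac_rfl
          _ = (s * c) * s ^ n := by rw [hc]
          _ = c * (s ^ n * s) := by ac_rfl
          _ = c * s ^ (n + 1) := by rw [pow_succ]
    choose wseq hwp hws using hind
    set K : ℕ → Set A := fun n => {e | ∃ k ≤ n, wseq k ∣ e} with hK
    have hKI : ∀ n, IsMIdeal (K n) := by
      intro n
      refine ⟨⟨0, Nat.zero_le n, dvd_zero _⟩, ?_⟩
      rintro u x ⟨k, hk, hdvd⟩
      exact ⟨k, hk, hdvd.mul_left u⟩
    have hKmono : ∀ n, K n ⊆ K (n + 1) := by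
      rintro n e ⟨k, hk, hdvd⟩
      exact ⟨k, hk.trans (Nat.le_succ n), hdvd⟩
    obtain ⟨N, hKst⟩ := hN K hKI hKmono
    have hmem : wseq (N + 1) ∈ K N := by
      rw [← hKst (N + 1) (Nat.le_succ N)]
      exact ⟨N + 1, le_refl _, dvd_refl _⟩
    obtain ⟨k, hk, e, he⟩ := hmem
    have h1 : t ^ (N + 2) = wseq (N + 1) * s ^ (N + 1) := hws (N + 1)
    have h2 : t ^ (k + 1) = wseq k * s ^ k := hws k
    have hps : s ^ (N + 1) = s ^ (N + 1 - k) * s ^ k := by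
      rw [← pow_add]; congr 1; omega
    have hpt : t ^ (N + 2) = t ^ (k + 1) * t ^ (N + 1 - k) := by
      rw [← pow_add]; congr 1; omega
    have heq1 : t ^ (k + 1) * (t ^ (N + 1 - k) * s ^ k)
        = t ^ (k + 1) * (e * s ^ (N + 1 - k) * s ^ k) := by
      calc t ^ (k + 1) * (t ^ (N + 1 - k) * s ^ k)
          = (t ^ (k + 1) * t ^ (N + 1 - k)) * s ^ k := by ac_rfl
        _ = t ^ (N + 2) * s ^ k := by rw [← hpt]
        _ = (wseq k * e) * s ^ (N + 1) * s ^ k := by rw [h1, he]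
        _ = (wseq k * e) * (s ^ (N + 1 - k) * s ^ k) * s ^ k := by rw [hps]
        _ = (wseq k * s ^ k) * (e * s ^ (N + 1 - k) * s ^ k) := by ac_rfl
        _ = t ^ (k + 1) * (e * s ^ (N + 1 - k) * s ^ k) := by rw [h2]
    have heq2 : t ^ (N + 1 - k) * s ^ k = (e * s ^ (N + 1 - k)) * s ^ k :=
      mul_left_cancel₀ (pow_ne_zero (k + 1) ht0) heq1
    have heq3 : t ^ (N + 1 - k) = e * s ^ (N + 1 - k) :=
      mul_right_cancel₀ (pow_ne_zero k hs) heq2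
    exact hst (hnormal t s hs ⟨N + 1 - k, by omega, e, heq3⟩)
  obtain ⟨b, hb, w, hbw, hw⟩ := hkey
  have hw0 : w ≠ 0 := fun h => hw (h ▸ hp0)
  have hb0 : b ≠ 0 := by
    intro h
    apply hw
    rw [h, mul_zero] at hbw
    rcases mul_eq_zero.mp hbw.symm with h' | h'
    · exact h' ▸ hp0
    · exact absurd h' hs
  have hφ : ∀ u ∈ p, ∃ u', u * w = u' * b := by
    intro u hu
    obtain ⟨c, hc⟩ := hu
    refine ⟨c, mul_right_cancel₀ hs ?_⟩
    calc u * w * s = u * (w * s) := by ac_rfl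
      _ = u * (t * b) := by rw [hbw]
      _ = (t * u) * b := by ac_rfl
      _ = (s * c) * b := by rw [hc]
      _ = c * b * s := by ac_rfl
  -- every nonzero prime contained in p equals p
  have hq : ∀ q : Set A, IsMPrime q → q ⊆ p → q ≠ {0} → q = p := by
    intro q hqP hqp hq0
    obtain ⟨⟨hq0', hqmul⟩, hqproper, hqprime⟩ := hqP
    by_cases hbq : b ∈ q
    · apply Set.Subset.antisymm hqp
      intro u hu
      obtain ⟨u', hu'⟩ := hφ u hu
      have h3 : u * w ∈ q := hu' ▸ hqmul u' b hbq
      rcases hqprime u w h3 with h4 | h4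
      · exact h4
      · exact absurd (hqp h4) hw
    · exfalso
      have hux : ∃ x ∈ q, x ≠ 0 := by
        by_contra hno
        push_neg at hno
        exact hq0 (Set.eq_singleton_iff_unique_mem.mpr ⟨hq0', hno⟩)
      obtain ⟨x₀, hx₀q, hx₀0⟩ := hux
      have hstep : ∀ u : {u : A // u ∈ q ∧ u ≠ 0},
          ∃ u' : {u : A // u ∈ q ∧ u ≠ 0}, u.1 * w = u'.1 * b := by
        rintro ⟨u, hu, hu0⟩
        obtain ⟨u', huw⟩ := hφ u (hqp hu)
        have h5 : u' * b ∈ q := by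
          rw [← huw, mul_comm]
          exact hqmul w u hu
        have h6 : u' ∈ q := (hqprime u' b h5).resolve_right hbq
        have h7 : u' ≠ 0 := by
          intro h
          rw [h, zero_mul] at huw
          rcases mul_eq_zero.mp huw with h' | h'
          · exact hu0 h'
          · exact hw0 h'
        exact ⟨⟨u', h6, h7⟩, huw⟩
      choose g hg using hstep
      set useq : ℕ → {u : A // u ∈ q ∧ u ≠ 0} := fun n => g^[n] ⟨x₀, hx₀q, hx₀0⟩
        with huseq
      have huseqs : ∀ n, (useq n).1 * w = (useq (n + 1)).1 * b := by
        intro n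
        have h8 : useq (n + 1) = g (useq n) := Function.iterate_succ_apply' g n _
        rw [h8]
        exact hg (useq n)
      set J : ℕ → Set A := fun n => {e | ∃ v, v ∉ p ∧ ∃ c, v * e = c * (useq n).1}
        with hJ
      have hJI : ∀ n, IsMIdeal (J n) := by
        intro n
        refine ⟨⟨1, h1p, 0, by simp⟩, ?_⟩
        rintro u x ⟨v, hv, c, hvc⟩
        refine ⟨v, hv, u * c, ?_⟩
        calc v * (u * x) = u * (v * x) := by ac_rfl
          _ = u * (c * (useq n).1) := by rw [hvc]
          _ = u * c * (useq n).1 := by ac_rfl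
      have hJmono : ∀ n, J n ⊆ J (n + 1) := by
        rintro n e ⟨v, hv, c, hvc⟩
        refine ⟨v * w, ?_, c * b, ?_⟩
        · intro hvw
          rcases hpprime v w hvw with h' | h'
          · exact hv h'
          · exact hw h'
        · calc (v * w) * e = (v * e) * w := by ac_rfl
            _ = (c * (useq n).1) * w := by rw [hvc]
            _ = c * ((useq n).1 * w) := by ac_rfl
            _ = c * ((useq (n + 1)).1 * b) := by rw [huseqs n]
            _ = (c * b) * (useq (n + 1)).1 := by ac_rfl
      obtain ⟨N, hJst⟩ := hN J hJI hJmono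
      have hmem : (useq (N + 1)).1 ∈ J N := by
        rw [← hJst (N + 1) (Nat.le_succ N)]
        exact ⟨1, h1p, 1, by simp⟩
      obtain ⟨v, hv, c, hvc⟩ := hmem
      have h8 : v * w * (useq (N + 1)).1 = c * b * (useq (N + 1)).1 := by
        calc v * w * (useq (N + 1)).1 = (v * (useq (N + 1)).1) * w := by ac_rfl
          _ = (c * (useq N).1) * w := by rw [hvc]
          _ = c * ((useq N).1 * w) := by ac_rfl
          _ = c * ((useq (N + 1)).1 * b) := by rw [huseqs N]
          _ = c * b * (useq (N + 1)).1 := by ac_rfl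
      have h9 : v * w = c * b := mul_right_cancel₀ (useq (N + 1)).2.2 h8
      have h10 : v * w ∈ p := h9 ▸ hpmul c b hb
      rcases hpprime v w h10 with h' | h'
      · exact hv h'
      · exact hw h'
  constructor
  · refine ⟨{0}, ⟨⟨rfl, ?_⟩, ?_, ?_⟩, ?_⟩
    · intro u x hx
      rw [Set.mem_singleton_iff] at hx ⊢
      rw [hx, mul_zero]
    · intro hcon
      have h1 : (1 : A) ∈ ({0} : Set A) := hcon ▸ Set.mem_univ 1
      rw [Set.mem_singleton_iff] at h1
      exact hs (by rw [← mul_one s, h1, mul_zero])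
    · intro u v huv
      rw [Set.mem_singleton_iff] at huv ⊢
      rcases mul_eq_zero.mp huv with h' | h'
      · exact Or.inl h'
      · exact Or.inr (by rw [Set.mem_singleton_iff]; exact h')
    · rw [Set.ssubset_iff_subset_ne]
      constructor
      · intro x hx
        rw [Set.mem_singleton_iff] at hx
        exact hx ▸ hp0
      · intro hcon
        rw [← hcon] at hsp
        exact hs (Set.mem_singleton_iff.mp hsp)
  · intro p₀ p₁ h₀ h₁ h01 h1p'
    by_cases hz : p₁ = {0}
    · have h00 : (0 : A) ∈ p₀ := h₀.1.1
      have hsub0 : ({0} : Set A) ⊆ p₀ := by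
        intro x hx
        rw [Set.mem_singleton_iff] at hx
        exact hx ▸ h00
      rw [hz] at h01
      exact h01.ne (Set.Subset.antisymm h01.subset hsub0)
    · exact h1p'.ne (hq p₁ h₁ h1p'.subset hz)

end Aux

/-- A noetherian normal cancellative commutative pointed monoid is the intersection of its
localizations at height one primes: an element `a / s` (with `s ≠ 0`) of the group
completion lies in `A` (i.e. `s ∣ a`) if and only if for every height one prime `p` it can
be written as a fraction `a' / s'` with `a' ∈ A` and `s' ∉ p` (equality of fractions being
`a * s' = a' * s`). -/
theorem normal_monoid_intersection_of_height_one_localizations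
    {A : Type*} [CommMonoidWithZero A] [IsCancelMulZero A]
    (hN : MonNoetherian A) (hnormal : MonNormal A) :
    ∀ a s : A, s ≠ 0 →
      (s ∣ a ↔ ∀ p : Set A, IsMPrime p → HeightOne p →
        ∃ a' s' : A, s' ∉ p ∧ a * s' = a' * s) := by
  intro a s hs
  constructor
  · rintro ⟨c, rfl⟩ p hp _
    refine ⟨c, 1, ?_, by rw [mul_one, mul_comm]⟩
    intro h1
    obtain ⟨⟨-, hpmul⟩, hproper, -⟩ := hp
    apply hproper
    ext x
    simp only [Set.mem_univ, iff_true]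
    have h2 := hpmul x 1 h1
    rwa [mul_one] at h2
  · intro h
    by_contra hsa
    obtain ⟨d₀, hd₀, hp⟩ := exists_prime_colon hN a s hsa
    have hht : HeightOne {b | s ∣ a * d₀ * b} :=
      colon_prime_heightOne hN hnormal (a * d₀) s hs hd₀ hp
    obtain ⟨a', s', hs', heq⟩ := h _ hp hht
    apply hs'
    show s ∣ a * d₀ * s'
    have h2 : s ∣ a * s' := ⟨a', by rw [heq, mul_comm]⟩
    have h3 : s ∣ (a * s') * d₀ := h2.mul_right d₀
    rwa [show (a * s') * d₀ = a * d₀ * s' by ac_rfl] at h3
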